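/- Let (X,d) be a metric space and u : X → ℝ a 1-Lipschitz function. For t ∈ ℝ, define the c-transform (tu)^c(y) = inf_{x∈X} (d(x,y)²/2 - t·u(x)). Then for all y ∈ X, (tu)^c(y) ≥ -t·u(y) - t²/2. Moreover, if there exists a point z ∈ X with u(z) - u(y) = sign(t)·d(y,z) and d(y,z) = |t|, then (tu)^c(y) = -t·u(y) - t²/2. -/
import Mathlib


/-- For a 1-Lipschitz `u`, the c-transform `(tu)^c(y) = inf_x (d(x,y)²/2 - t·u(x))`
satisfies `(tu)^c(y) ≥ -t·u(y) - t²/2`, with equality if there is a point `z` with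
`u(z) - u(y) = sign(t)·d(y,z)` and `d(y,z) = |t|`. -/
theorem stmt9 {X : Type*} [MetricSpace X] (u : X → ℝ) (hu : LipschitzWith 1 u)
    (t : ℝ) (y : X) :
    (⨅ x : X, (dist x y ^ 2 / 2 - t * u x)) ≥ -t * u y - t ^ 2 / 2 ∧
    ((∃ z : X, u z - u y = Real.sign t * dist y z ∧ dist y z = |t|) →
      (⨅ x : X, (dist x y ^ 2 / 2 - t * u x)) = -t * u y - t ^ 2 / 2) := by
  have key : ∀ x : X, dist x y ^ 2 / 2 - t * u x ≥ -t * u y - t ^ 2 / 2 := by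
    intro x
    have hl : |u x - u y| ≤ dist x y := by
      have := hu.dist_le_mul x y
      simpa [Real.dist_eq] using this
    have h1 : t * (u x - u y) ≤ |t| * dist x y := by
      calc t * (u x - u y) ≤ |t * (u x - u y)| := le_abs_self _
        _ = |t| * |u x - u y| := abs_mul _ _
        _ ≤ |t| * dist x y := by
            exact mul_le_mul_of_nonneg_left hl (abs_nonneg t)
    have h2 : 0 ≤ (dist x y - |t|) ^ 2 / 2 := by positivity
    have : dist x y ^ 2 / 2 - |t| * dist x y + t ^ 2 / 2 = (dist x y - |t|) ^ 2 / 2 := by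
      have : |t| ^ 2 = t ^ 2 := sq_abs t
      nlinarith [sq_abs t]
    nlinarith [sq_abs t]
  have hbdd : BddBelow (Set.range fun x : X => dist x y ^ 2 / 2 - t * u x) := by
    refine ⟨-t * u y - t ^ 2 / 2, ?_⟩
    rintro _ ⟨x, rfl⟩
    exact key x
  have : Nonempty X := ⟨y⟩
  constructor
  · exact le_ciInf key
  · rintro ⟨z, hz1, hz2⟩
    have hval : dist z y ^ 2 / 2 - t * u z = -t * u y - t ^ 2 / 2 := by
      have hst : Real.sign t * |t| = t := by
        rcases lt_trichotomy t 0 with h | h | h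
        · rw [Real.sign_of_neg h, abs_of_neg h]; ring
        · simp [h]
        · rw [Real.sign_of_pos h, abs_of_pos h]; ring
      have hdz : dist z y = |t| := by rw [dist_comm]; exact hz2
      have huz : u z = u y + Real.sign t * |t| := by
        rw [← hz2]; linarith [hz1]
      rw [hdz, huz, hst]
      have : |t| ^ 2 = t ^ 2 := sq_abs t
      nlinarith
    refine le_antisymm ?_ (le_ciInf key)
    rw [← hval]
    exact ciInf_le hbdd z
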